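/- Define the colouring χ₃ : ℕ⁺ → {−1, +1} recursively by χ₃(3k+1) = 1, χ₃(3k+2) = −1, and χ₃(3k) = χ₃(k). Then every homogeneous arithmetic progression contained in {0, 1, …, n} has discrepancy O(log n) under χ₃; explicitly, for all positive integers d and k with kd ≤ n, |∑_{j=1}^{k} χ₃(jd)| ≤ (log n)/(log 3) + 1. -/

import Mathlib

open Finset

section Aux

variable (χ : ℕ → ℤ)
    (h1 : ∀ k : ℕ, χ (3 * k + 1) = 1)
    (h2 : ∀ k : ℕ, χ (3 * k + 2) = -1)
    (h3 : ∀ k : ℕ, 0 < k → χ (3 * k) = χ k)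

include h1 h2 h3

lemma chi3_pm : ∀ m : ℕ, 0 < m → χ m = 1 ∨ χ m = -1 := by
  have key : ∀ N m : ℕ, m ≤ N → 0 < m → χ m = 1 ∨ χ m = -1 := by
    intro N
    induction N with
    | zero => intro m h hm; omega
    | succ N ih =>
      intro m h hm
      rcases (show m % 3 = 0 ∨ m % 3 = 1 ∨ m % 3 = 2 by omega) with h0 | h0 | h0
      · obtain ⟨p, rfl⟩ : ∃ p, m = 3 * p := ⟨m / 3, by omega⟩
        have hp : 0 < p := by omega
        rw [h3 _ hp]
        exact ih p (by omega) hp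
      · obtain ⟨p, rfl⟩ : ∃ p, m = 3 * p + 1 := ⟨m / 3, by omega⟩
        exact Or.inl (h1 _)
      · obtain ⟨p, rfl⟩ : ∃ p, m = 3 * p + 2 := ⟨m / 3, by omega⟩
        exact Or.inr (h2 _)
  intro m hm; exact key m m le_rfl hm

lemma chi3_mul : ∀ a b : ℕ, 0 < a → 0 < b → χ (a * b) = χ a * χ b := by
  have key : ∀ N a b : ℕ, a * b ≤ N → 0 < a → 0 < b → χ (a * b) = χ a * χ b := by
    intro N
    induction N with
    | zero => intro a b h ha hb; exfalso; nlinarith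
    | succ N ih =>
      intro a b h ha hb
      rcases (show a % 3 = 0 ∨ a % 3 = 1 ∨ a % 3 = 2 by omega) with ha0 | ha0 | ha0
      · obtain ⟨m, rfl⟩ : ∃ m, a = 3 * m := ⟨a / 3, by omega⟩
        have hm : 0 < m := by omega
        have hmb : 0 < m * b := Nat.mul_pos hm hb
        have h' : 3 * (m * b) ≤ N + 1 := by rw [← mul_assoc]; exact h
        have hle : m * b ≤ N := by omega
        rw [show 3 * m * b = 3 * (m * b) by ring, h3 _ hmb, h3 _ hm, ih _ _ hle hm hb]
      · rcases (show b % 3 = 0 ∨ b % 3 = 1 ∨ b % 3 = 2 by omega) with hb0 | hb0 | hb0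
        · obtain ⟨m, rfl⟩ : ∃ m, b = 3 * m := ⟨b / 3, by omega⟩
          have hm : 0 < m := by omega
          have ham : 0 < a * m := Nat.mul_pos ha hm
          have h' : 3 * (a * m) ≤ N + 1 := by rw [show 3 * (a * m) = a * (3 * m) by ring]; exact h
          have hle : a * m ≤ N := by omega
          rw [show a * (3 * m) = 3 * (a * m) by ring, h3 _ ham, h3 _ hm, ih _ _ hle ha hm]
        · have hab : a * b % 3 = 1 := by rw [Nat.mul_mod, ha0, hb0]
          have va : χ a = 1 := by rw [show a = 3 * (a / 3) + 1 by omega]; exact h1 _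
          have vb : χ b = 1 := by rw [show b = 3 * (b / 3) + 1 by omega]; exact h1 _
          have e3 : a * b = 3 * (a * b / 3) + 1 := by omega
          rw [e3, h1, va, vb]; ring
        · have hab : a * b % 3 = 2 := by rw [Nat.mul_mod, ha0, hb0]
          have va : χ a = 1 := by rw [show a = 3 * (a / 3) + 1 by omega]; exact h1 _
          have vb : χ b = -1 := by rw [show b = 3 * (b / 3) + 2 by omega]; exact h2 _
          have e3 : a * b = 3 * (a * b / 3) + 2 := by omega
          rw [e3, h2, va, vb]; ring
      · rcases (show b % 3 = 0 ∨ b % 3 = 1 ∨ b % 3 = 2 by omega) with hb0 | hb0 | hb0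
        · obtain ⟨m, rfl⟩ : ∃ m, b = 3 * m := ⟨b / 3, by omega⟩
          have hm : 0 < m := by omega
          have ham : 0 < a * m := Nat.mul_pos ha hm
          have h' : 3 * (a * m) ≤ N + 1 := by rw [show 3 * (a * m) = a * (3 * m) by ring]; exact h
          have hle : a * m ≤ N := by omega
          rw [show a * (3 * m) = 3 * (a * m) by ring, h3 _ ham, h3 _ hm, ih _ _ hle ha hm]
        · have hab : a * b % 3 = 2 := by rw [Nat.mul_mod, ha0, hb0]
          have va : χ a = -1 := by rw [show a = 3 * (a / 3) + 2 by omega]; exact h2 _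
          have vb : χ b = 1 := by rw [show b = 3 * (b / 3) + 1 by omega]; exact h1 _
          have e3 : a * b = 3 * (a * b / 3) + 2 := by omega
          rw [e3, h2, va, vb]; ring
        · have hab : a * b % 3 = 1 := by rw [Nat.mul_mod, ha0, hb0]
          have va : χ a = -1 := by rw [show a = 3 * (a / 3) + 2 by omega]; exact h2 _
          have vb : χ b = -1 := by rw [show b = 3 * (b / 3) + 2 by omega]; exact h2 _
          have e3 : a * b = 3 * (a * b / 3) + 1 := by omega
          rw [e3, h1, va, vb]; ring
  intro a b ha hb; exact key (a * b) a b le_rfl ha hb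

lemma chi3_block : ∀ m : ℕ, ∑ j ∈ Icc 1 (3 * m), χ j = ∑ j ∈ Icc 1 m, χ j := by
  intro m
  induction m with
  | zero => simp
  | succ m ih =>
    have e3 : 3 * (m + 1) = (3 * m + 2) + 1 := by ring
    rw [e3, Finset.sum_Icc_succ_top (by omega),
      show (3 * m + 2 : ℕ) = (3 * m + 1) + 1 from rfl,
      Finset.sum_Icc_succ_top (by omega),
      show (3 * m + 1 : ℕ) = (3 * m) + 1 from rfl,
      Finset.sum_Icc_succ_top (by omega), ih,
      Finset.sum_Icc_succ_top (by omega : 1 ≤ m + 1)]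
    have v1 : χ (3 * m + 1) = 1 := h1 m
    have v2 : χ (3 * m + 1 + 1) = -1 := by
      rw [show 3 * m + 1 + 1 = 3 * m + 2 from rfl]; exact h2 m
    have v3 : χ (3 * m + 2 + 1) = χ (m + 1) := by
      rw [show 3 * m + 2 + 1 = 3 * (m + 1) from by ring]
      exact h3 _ (by omega)
    rw [v1, v2, v3]; ring

lemma chi3_Fbound : ∀ k : ℕ, 0 ≤ ∑ j ∈ Icc 1 k, χ j ∧
    ∑ j ∈ Icc 1 k, χ j ≤ (Nat.log 3 k : ℤ) + 1 := by
  have key : ∀ N k : ℕ, k ≤ N → 0 ≤ ∑ j ∈ Icc 1 k, χ j ∧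
      ∑ j ∈ Icc 1 k, χ j ≤ (Nat.log 3 k : ℤ) + 1 := by
    intro N
    induction N with
    | zero =>
      intro k h
      have : k = 0 := by omega
      subst this; simp
    | succ N ih =>
      intro k h
      rcases Nat.eq_zero_or_pos k with hk | hk
      · subst hk; simp
      rcases (show k % 3 = 0 ∨ k % 3 = 1 ∨ k % 3 = 2 by omega) with h0 | h0 | h0
      · obtain ⟨m, rfl⟩ : ∃ m, k = 3 * m := ⟨k / 3, by omega⟩
        have hm : 0 < m := by omega
        obtain ⟨ihl, ihr⟩ := ih m (by omega)
        rw [chi3_block χ h1 h2 h3 m]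
        have hmono : Nat.log 3 m ≤ Nat.log 3 (3 * m) := Nat.log_mono_right (by omega)
        have h' : (Nat.log 3 m : ℤ) ≤ (Nat.log 3 (3 * m) : ℤ) := by exact_mod_cast hmono
        exact ⟨ihl, by linarith⟩
      · obtain ⟨m, rfl⟩ : ∃ m, k = 3 * m + 1 := ⟨k / 3, by omega⟩
        obtain ⟨ihl, ihr⟩ := ih m (by omega)
        have heq : ∑ j ∈ Icc 1 (3 * m + 1), χ j = ∑ j ∈ Icc 1 m, χ j + 1 := by
          rw [Finset.sum_Icc_succ_top (by omega), chi3_block χ h1 h2 h3, h1]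
        rw [heq]
        refine ⟨by linarith, ?_⟩
        rcases Nat.eq_zero_or_pos m with rfl | hm
        · simp [Nat.log_one_right]
        · have hlog : Nat.log 3 m + 1 ≤ Nat.log 3 (3 * m + 1) := by
            have e1 : Nat.log 3 (m * 3) = Nat.log 3 m + 1 :=
              Nat.log_mul_base (by norm_num) (by omega)
            have e2 : Nat.log 3 (m * 3) ≤ Nat.log 3 (3 * m + 1) :=
              Nat.log_mono_right (by omega)
            omega
          have h' : (Nat.log 3 m : ℤ) + 1 ≤ (Nat.log 3 (3 * m + 1) : ℤ) := by exact_mod_cast hlog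
          linarith
      · obtain ⟨m, rfl⟩ : ∃ m, k = 3 * m + 2 := ⟨k / 3, by omega⟩
        obtain ⟨ihl, ihr⟩ := ih m (by omega)
        have heq : ∑ j ∈ Icc 1 (3 * m + 2), χ j = ∑ j ∈ Icc 1 m, χ j := by
          rw [show (3 * m + 2 : ℕ) = (3 * m + 1) + 1 from rfl,
            Finset.sum_Icc_succ_top (by omega),
            show (3 * m + 1 : ℕ) = (3 * m) + 1 from rfl,
            Finset.sum_Icc_succ_top (by omega), chi3_block χ h1 h2 h3, h1,
            show 3 * m + 1 + 1 = 3 * m + 2 from rfl, h2]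
          ring
        rw [heq]
        have hmono : Nat.log 3 m ≤ Nat.log 3 (3 * m + 2) := Nat.log_mono_right (by omega)
        have h' : (Nat.log 3 m : ℤ) ≤ (Nat.log 3 (3 * m + 2) : ℤ) := by exact_mod_cast hmono
        exact ⟨ihl, by linarith⟩
  intro k; exact key k k le_rfl

end Aux

/-- Under the recursive colouring `χ₃` of the positive integers, with `χ₃(3k+1) = 1`,
`χ₃(3k+2) = −1` and `χ₃(3k) = χ₃(k)`, every homogeneous arithmetic progression
`{d, 2d, …, kd}` contained in `{0, 1, …, n}` has discrepancy at most
`log n / log 3 + 1` (in particular, `O(log n)`). -/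
theorem hap_discrepancy_log_bound_of_chi3
    (χ : ℕ → ℤ)
    (h1 : ∀ k : ℕ, χ (3 * k + 1) = 1)
    (h2 : ∀ k : ℕ, χ (3 * k + 2) = -1)
    (h3 : ∀ k : ℕ, 0 < k → χ (3 * k) = χ k) :
    ∀ d k n : ℕ, 0 < d → 0 < k → k * d ≤ n →
      ((|∑ j ∈ Finset.Icc 1 k, χ (j * d)| : ℤ) : ℝ) ≤ Real.log n / Real.log 3 + 1 := by
  intro d k n hd hk hn
  have hsum : ∑ j ∈ Finset.Icc 1 k, χ (j * d) = (∑ j ∈ Finset.Icc 1 k, χ j) * χ d := by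
    rw [Finset.sum_mul]
    refine Finset.sum_congr rfl fun j hj => ?_
    have hj1 : 0 < j := by simp [Finset.mem_Icc] at hj; omega
    exact chi3_mul χ h1 h2 h3 j d hj1 hd
  have hχd : |χ d| = 1 := by
    rcases chi3_pm χ h1 h2 h3 d hd with h | h <;> simp [h]
  obtain ⟨hF0, hF1⟩ := chi3_Fbound χ h1 h2 h3 k
  have habs : |∑ j ∈ Finset.Icc 1 k, χ (j * d)| = ∑ j ∈ Finset.Icc 1 k, χ j := by
    rw [hsum, abs_mul, hχd, mul_one, abs_of_nonneg hF0]
  rw [habs]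
  have hcast : ((∑ j ∈ Finset.Icc 1 k, χ j : ℤ) : ℝ) ≤ (Nat.log 3 k : ℝ) + 1 := by
    exact_mod_cast hF1
  have hlog3 : (0 : ℝ) < Real.log 3 := Real.log_pos (by norm_num)
  have hkn : k ≤ n := le_trans (Nat.le_mul_of_pos_right k hd) hn
  have hpow : (3 : ℕ) ^ Nat.log 3 k ≤ n := le_trans (Nat.pow_log_le_self 3 (by omega)) hkn
  have hreal : (Nat.log 3 k : ℝ) * Real.log 3 ≤ Real.log n := by
    have h' : Real.log ((3 : ℝ) ^ Nat.log 3 k) ≤ Real.log n := by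
      apply Real.log_le_log (by positivity)
      exact_mod_cast hpow
    rw [Real.log_pow] at h'; linarith
  have hfin : (Nat.log 3 k : ℝ) ≤ Real.log n / Real.log 3 := by
    rw [le_div_iff₀ hlog3]; exact hreal
  linarith
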